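/- Assume the CI model is Markov with respect to a DAG G* and satisfies adjacency-faithfulness. Then every DAG output by the sparsest permutation algorithm (i.e., every G_π achieving the minimum number of edges over all permutations π) has skeleton equal to the skeleton of G*. -/

import Mathlib

open scoped Classical

/-- A directed acyclic graph on `Fin p`: a finite edge set together with a
topological ordering witnessing acyclicity. -/
structure DAG (p : ℕ) where
  edges : Finset (Fin p × Fin p)
  acyclic : ∃ σ : Equiv.Perm (Fin p), ∀ e ∈ edges, σ.symm e.1 < σ.symm e.2

namespace DAG

variable {p : ℕ}

def edgeRel (G : DAG p) (a b : Fin p) : Prop := (a, b) ∈ G.edges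

/-- adjacency in the skeleton -/
def adj (G : DAG p) (a b : Fin p) : Prop := (a, b) ∈ G.edges ∨ (b, a) ∈ G.edges

/-- the skeleton as a finite set of unordered pairs -/
def skeleton (G : DAG p) : Finset (Sym2 (Fin p)) := G.edges.image (fun e => s(e.1, e.2))

/-- `b` is a collider on a path segment `a - b - c`. -/
def isCollider (G : DAG p) (a b c : Fin p) : Prop := (a, b) ∈ G.edges ∧ (c, b) ∈ G.edges

/-- `b` is in `S` or an ancestor of some element of `S`. -/
def ancestorOfSet (G : DAG p) (b : Fin p) (S : Finset (Fin p)) : Prop :=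
  ∃ s ∈ S, Relation.ReflTransGen G.edgeRel b s

/-- a (simple, undirected) path from `i` to `j` in the skeleton, as a list of vertices -/
def IsTrail (G : DAG p) (i j : Fin p) (l : List (Fin p)) : Prop :=
  l.Chain' G.adj ∧ l.Nodup ∧ 2 ≤ l.length ∧ l.head? = some i ∧ l.getLast? = some j

/-- the path `l` d-connects its endpoints given `S`: every collider on it is in `S` or
has a descendant in `S`, and every non-collider on it is not in `S`. -/
def dConnectsPath (G : DAG p) (S : Finset (Fin p)) (l : List (Fin p)) : Prop :=
  ∀ a b c : Fin p, [a, b, c] <:+: l →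
    (G.isCollider a b c → G.ancestorOfSet b S) ∧ (¬ G.isCollider a b c → b ∉ S)

def dConnected (G : DAG p) (i j : Fin p) (S : Finset (Fin p)) : Prop :=
  ∃ l : List (Fin p), G.IsTrail i j l ∧ G.dConnectsPath S l

def dSep (G : DAG p) (i j : Fin p) (S : Finset (Fin p)) : Prop :=
  i ≠ j ∧ ¬ G.dConnected i j S

end DAG

/-- A (pairwise) conditional independence model: `CI i j S` means
`X_i ⫫ X_j | X_S`. -/
abbrev CIModel (p : ℕ) := Fin p → Fin p → Finset (Fin p) → Prop

variable {p : ℕ}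

/-- `G` is Markov w.r.t. the CI model: every d-separation is a CI statement. -/
def Markov (G : DAG p) (CI : CIModel p) : Prop :=
  ∀ i j S, G.dSep i j S → CI i j S

/-- Markov equivalence: same d-separation statements. -/
def MarkovEquiv (G G' : DAG p) : Prop :=
  ∀ i j S, G.dSep i j S ↔ G'.dSep i j S

/-- `π` is a topological ordering of `G`. -/
def IsTopOrder (G : DAG p) (π : Equiv.Perm (Fin p)) : Prop :=
  ∀ e ∈ G.edges, π.symm e.1 < π.symm e.2

/-- the predecessors `{π 0, …, π (k-1)}` of position `k` in the ordering `π` -/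
def predSet (π : Equiv.Perm (Fin p)) (k : Fin p) : Finset (Fin p) :=
  (Finset.univ.filter (fun m => m < k)).image π

/-- The minimal I-map `G_π`: for `j < k` there is an edge `π j → π k` iff
`π j` and `π k` are conditionally dependent given all other predecessors of `π k`. -/
noncomputable def minimalIMap (CI : CIModel p) (π : Equiv.Perm (Fin p)) : DAG p where
  edges := Finset.univ.filter (fun q : Fin p × Fin p =>
    ∃ j k : Fin p, j < k ∧ q = (π j, π k) ∧ ¬ CI (π j) (π k) ((predSet π k).erase (π j)))
  acyclic := ⟨π, by
    intro e he
    rw [Finset.mem_filter] at he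
    obtain ⟨-, j, k, hjk, rfl, -⟩ := he
    simpa using hjk⟩

/-- the minimal number of edges of a minimal I-map `G_π` over all permutations `π` -/
noncomputable def spScore (CI : CIModel p) : ℕ :=
  ((Finset.univ : Finset (Equiv.Perm (Fin p))).image
    (fun π => (minimalIMap CI π).edges.card)).min' (Finset.univ_nonempty.image _)

/-- adjacency-faithfulness: endpoints of edges of `G` are conditionally dependent
given any conditioning set. -/
def AdjFaithful (G : DAG p) (CI : CIModel p) : Prop :=
  ∀ e ∈ G.edges, ∀ S : Finset (Fin p), e.1 ∉ S → e.2 ∉ S →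
    ¬ CI e.1 e.2 S ∧ ¬ CI e.2 e.1 S

/-- the sparsest Markov representation assumption -/
def SMR (G : DAG p) (CI : CIModel p) : Prop :=
  Markov G CI ∧
    ∀ G' : DAG p, Markov G' CI → ¬ MarkovEquiv G' G → G.edges.card < G'.edges.card

/-- the set of d-separation statements of `G` -/
def DsepSet (G : DAG p) : Set (Fin p × Fin p × Finset (Fin p)) :=
  {t | G.dSep t.1 t.2.1 t.2.2}

/-- P-minimality: no Markov DAG entails strictly more d-separations. -/
def PMinimal (G : DAG p) (CI : CIModel p) : Prop :=
  ∀ G' : DAG p, Markov G' CI → ¬ (DsepSet G ⊂ DsepSet G')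


section Aux

variable {p : ℕ}

lemma getElem_of_head? {α : Type*} {l : List α} {b : α} (hl : 0 < l.length)
    (h : l.head? = some b) : l[0] = b := by
  rw [List.head?_eq_getElem?, List.getElem?_eq_getElem hl] at h
  exact Option.some_inj.mp h

lemma getElem_of_getLast? {α : Type*} {l : List α} {b : α} (hl : 0 < l.length)
    (h : l.getLast? = some b) : l[l.length - 1]'(by omega) = b := by
  rw [List.getLast?_eq_getElem?, List.getElem?_eq_getElem (by omega)] at h
  exact Option.some_inj.mp h

lemma triple_infix {α : Type*} (l : List α) (i : ℕ) (h : i + 2 < l.length) :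
    [l[i], l[i+1], l[i+2]] <:+: l := by
  have h1 : l.drop i = l[i] :: l[i+1] :: l[i+2] :: l.drop (i+3) := by
    rw [List.drop_eq_getElem_cons (by omega), List.drop_eq_getElem_cons (by omega),
      List.drop_eq_getElem_cons (by omega)]
  have h2 : [l[i], l[i+1], l[i+2]] <+: l.drop i := by
    rw [h1]; exact ⟨l.drop (i+3), rfl⟩
  exact h2.isInfix.trans (l.drop_suffix i).isInfix

lemma reflTransGen_mono (G : DAG p) (σ : Equiv.Perm (Fin p)) (hσ : IsTopOrder G σ)
    {x y : Fin p} (h : Relation.ReflTransGen G.edgeRel x y) : σ.symm x ≤ σ.symm y := by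
  induction h with
  | refl => exact le_rfl
  | tail _ hbc ih => exact ih.trans (le_of_lt (hσ _ hbc))

lemma mem_predSet_iff {π : Equiv.Perm (Fin p)} {k : Fin p} {x : Fin p} :
    x ∈ predSet π k ↔ π.symm x < k := by
  constructor
  · rintro hx
    simp only [predSet, Finset.mem_image, Finset.mem_filter, Finset.mem_univ, true_and] at hx
    obtain ⟨m, hm, rfl⟩ := hx
    simpa using hm
  · intro hx
    simp only [predSet, Finset.mem_image, Finset.mem_filter, Finset.mem_univ, true_and]
    exact ⟨π.symm x, hx, by simp⟩

lemma self_not_mem_predSet (π : Equiv.Perm (Fin p)) (c : Fin p) :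
    c ∉ predSet π (π.symm c) := by
  intro h
  have := mem_predSet_iff.mp h
  exact lt_irrefl _ this

/-- Core argument: a d-connecting trail, listed from `b = σ k` backwards, leads to a
contradiction when all of `S` precedes `k`. -/
lemma walk_contra (G : DAG p) (σ : Equiv.Perm (Fin p)) (hσ : IsTopOrder G σ)
    (k : Fin p) (S : Finset (Fin p)) (hS : ∀ s ∈ S, σ.symm s < k)
    (r : List (Fin p)) (hL2 : 2 ≤ r.length)
    (hadjr : ∀ i (hi : i + 1 < r.length), G.adj (r[i]'(Nat.lt_of_succ_lt hi)) (r[i+1]'hi))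
    (hrconn : ∀ x y z : Fin p, [x, y, z] <:+: r →
      (G.isCollider x y z → G.ancestorOfSet y S) ∧ (¬ G.isCollider x y z → y ∉ S))
    (hr0 : σ.symm (r[0]'(by omega)) = k)
    (hrlastlt : σ.symm (r[r.length - 1]'(by omega)) < k)
    (hSfull : ∀ v : Fin p, σ.symm v < k → v ≠ r[r.length - 1]'(by omega) → v ∈ S)
    (hnoadj : (r[r.length - 1]'(by omega), r[0]'(by omega)) ∉ G.edges) :
    False := by
  have hnoanc : ∀ v : Fin p, k ≤ σ.symm v → ¬ G.ancestorOfSet v S := by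
    rintro v hv ⟨s, hsS, hrt⟩
    have h3 := reflTransGen_mono G σ hσ hrt
    have h4 := hS s hsS
    omega
  rcases hadjr 0 (by omega) with hcase | hcase
  · -- the trail starts with an edge out of `r[0]`: walk forward forever
    have main : ∀ i (hi : i < r.length), k ≤ σ.symm (r[i]'hi) ∧
        ∀ (hi' : i + 1 < r.length), (r[i]'hi, r[i+1]'hi') ∈ G.edges := by
      intro i
      induction i with
      | zero =>
        intro hi
        exact ⟨le_of_eq hr0.symm, fun hi' => hcase⟩
      | succ n ih =>
        intro hi
        have hn : n < r.length := by omega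
        obtain ⟨ihle, ihedge⟩ := ih hn
        have hedge : (r[n]'hn, r[n+1]'hi) ∈ G.edges := ihedge hi
        have hstep : σ.symm (r[n]'hn) < σ.symm (r[n+1]'hi) := hσ _ hedge
        have hle : k ≤ σ.symm (r[n+1]'hi) := le_trans ihle (le_of_lt hstep)
        refine ⟨hle, fun hi' => ?_⟩
        have htrip := triple_infix r n (by omega)
        have hcond := hrconn _ _ _ htrip
        by_cases hcol : G.isCollider (r[n]'hn) (r[n+1]'hi) (r[n+2]'hi')
        · exact absurd (hcond.1 hcol) (hnoanc _ hle)
        · have hne : (r[n+2]'hi', r[n+1]'hi) ∉ G.edges := fun h => hcol ⟨hedge, h⟩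
          rcases hadjr (n+1) hi' with h | h
          · exact h
          · exact absurd h hne
    have hfin : k ≤ σ.symm (r[r.length - 1]'(by omega)) :=
      (main (r.length - 1) (by omega)).1
    exact absurd hrlastlt (not_lt.mpr hfin)
  · -- the trail starts with an edge into `r[0]`
    have h1lt0 : σ.symm (r[1]'(by omega)) < σ.symm (r[0]'(by omega)) := hσ _ hcase
    have h1lt : σ.symm (r[1]'(by omega)) < k := lt_of_lt_of_le h1lt0 (le_of_eq hr0)
    by_cases heq : r[1]'(by omega) = r[r.length - 1]'(by omega)
    · rw [heq] at hcase
      exact hnoadj hcase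
    · have h1S : r[1]'(by omega) ∈ S := hSfull _ h1lt heq
      have hL3 : 3 ≤ r.length := by
        rcases Nat.lt_or_ge r.length 3 with hc | hc
        · exfalso
          apply heq
          have h2' : r.length = 2 := by omega
          simp only [h2']
        · exact hc
      have htrip := triple_infix r 0 (by omega)
      have hcond := hrconn _ _ _ htrip
      by_cases hcol : G.isCollider (r[0]'(by omega)) (r[1]'(by omega)) (r[2]'(by omega))
      · have h01 : (r[0]'(by omega), r[1]'(by omega)) ∈ G.edges := hcol.1
        have hgt : σ.symm (r[0]'(by omega)) < σ.symm (r[1]'(by omega)) := hσ _ h01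
        exact lt_asymm h1lt0 hgt
      · exact (hcond.2 hcol) h1S

/-- Key d-separation lemma: if `σ` is a topological order of `G` and `σ j`, `σ k`
(`j < k`) are non-adjacent, then they are d-separated given the other predecessors. -/
lemma key_dsep (G : DAG p) (σ : Equiv.Perm (Fin p)) (hσ : IsTopOrder G σ)
    (j k : Fin p) (hjk : j < k)
    (h1 : (σ j, σ k) ∉ G.edges) (h2 : (σ k, σ j) ∉ G.edges) :
    G.dSep (σ j) (σ k) ((predSet σ k).erase (σ j)) := by
  have hab : σ j ≠ σ k := fun h => absurd (σ.injective h) (ne_of_lt hjk)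
  refine ⟨hab, ?_⟩
  rintro ⟨l, ⟨hchain, hnodup, hlen, hhead, hlast⟩, hconn⟩
  have hLr : l.reverse.length = l.length := l.length_reverse
  have hL2 : 2 ≤ l.reverse.length := by omega
  have hr0 : l.reverse[0]'(by omega) = σ k :=
    getElem_of_head? (by omega) (by rw [List.head?_reverse]; exact hlast)
  have hrlast : l.reverse[l.reverse.length - 1]'(by omega) = σ j :=
    getElem_of_getLast? (by omega) (by rw [List.getLast?_reverse]; exact hhead)
  refine walk_contra G σ hσ k ((predSet σ k).erase (σ j)) ?_ l.reverse hL2 ?_ ?_ ?_ ?_ ?_ ?_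
  · intro s hs
    exact mem_predSet_iff.mp (Finset.mem_of_mem_erase hs)
  · intro i hi
    have hrchain : l.reverse.Chain' G.adj := by
      show List.IsChain _ _; rw [List.isChain_reverse]
      exact List.IsChain.imp (fun x y h => Or.symm h) hchain
    change List.IsChain _ _ at hrchain; rw [List.isChain_iff_getElem] at hrchain
    have := hrchain i (by omega)
    simpa using this
  · intro x y z hinf
    have hinf' : [z, y, x] <:+: l := by
      rw [← l.reverse_reverse]
      exact List.reverse_infix.mpr (by simpa using hinf)
    have hc := hconn z y x hinf'
    constructor
    · intro hcol; exact hc.1 ⟨hcol.2, hcol.1⟩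
    · intro hcol; exact hc.2 (fun h => hcol ⟨h.2, h.1⟩)
  · rw [hr0]; simp
  · rw [hrlast]; simpa using hjk
  · intro v hv hne
    rw [hrlast] at hne
    exact Finset.mem_erase.mpr ⟨hne, mem_predSet_iff.mpr hv⟩
  · rw [hr0, hrlast]
    exact h1

lemma skeleton_card (G : DAG p) : G.skeleton.card = G.edges.card := by
  apply Finset.card_image_of_injOn
  intro e he f hf hef
  obtain ⟨σ, hσ⟩ := G.acyclic
  rcases Sym2.eq_iff.mp hef with ⟨h1, h2⟩ | ⟨h1, h2⟩
  · exact Prod.ext h1 h2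
  · exfalso
    have hfe : f = (e.2, e.1) := Prod.ext h2.symm h1.symm
    have h3 := hσ e he
    have h4 := hσ f hf
    rw [hfe] at h4
    exact absurd (h3.trans h4) (lt_irrefl _)

lemma edge_ne (G : DAG p) {e : Fin p × Fin p} (he : e ∈ G.edges) : e.1 ≠ e.2 := by
  obtain ⟨σ, hσ⟩ := G.acyclic
  intro h
  have := hσ e he
  rw [h] at this
  exact lt_irrefl _ this

/-- adjacency-faithfulness: every edge of `G` appears (as an unordered pair) in every
minimal I-map. -/
lemma skel_subset_of_AF (CI : CIModel p) (G : DAG p) (hAF : AdjFaithful G CI)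
    (π : Equiv.Perm (Fin p)) : G.skeleton ⊆ (minimalIMap CI π).skeleton := by
  intro x hx
  rw [DAG.skeleton, Finset.mem_image] at hx
  obtain ⟨e, he, rfl⟩ := hx
  obtain ⟨a, b⟩ := e
  have hab : a ≠ b := edge_ne G he
  rcases lt_or_gt_of_ne (fun h : π.symm a = π.symm b => hab (π.symm.injective h)) with hlt | hlt
  · have hmem : (a, b) ∈ (minimalIMap CI π).edges := by
      rw [minimalIMap, Finset.mem_filter]
      refine ⟨Finset.mem_univ _, π.symm a, π.symm b, hlt, by simp, ?_⟩
      simp only [Equiv.apply_symm_apply]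
      refine (hAF (a, b) he _ (Finset.notMem_erase _ _) ?_).1
      intro h
      exact self_not_mem_predSet π b (Finset.mem_of_mem_erase h)
    rw [DAG.skeleton, Finset.mem_image]
    exact ⟨(a, b), hmem, rfl⟩
  · have hmem : (b, a) ∈ (minimalIMap CI π).edges := by
      rw [minimalIMap, Finset.mem_filter]
      refine ⟨Finset.mem_univ _, π.symm b, π.symm a, hlt, by simp, ?_⟩
      simp only [Equiv.apply_symm_apply]
      refine (hAF (a, b) he _ ?_ (Finset.notMem_erase _ _)).2
      intro h
      exact self_not_mem_predSet π a (Finset.mem_of_mem_erase h)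
    rw [DAG.skeleton, Finset.mem_image]
    exact ⟨(b, a), hmem, Sym2.eq_swap⟩

/-- Markov: for a topological order `σ` of `G`, the minimal I-map `G_σ` has skeleton
contained in that of `G`. -/
lemma skel_subset_of_markov (CI : CIModel p) (G : DAG p) (hM : Markov G CI)
    (σ : Equiv.Perm (Fin p)) (hσ : IsTopOrder G σ) :
    (minimalIMap CI σ).skeleton ⊆ G.skeleton := by
  intro x hx
  rw [DAG.skeleton, Finset.mem_image] at hx
  obtain ⟨q, hq, rfl⟩ := hx
  rw [minimalIMap, Finset.mem_filter] at hq
  obtain ⟨-, j, k, hjk, rfl, hnCI⟩ := hq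
  by_contra hns
  have h1 : (σ j, σ k) ∉ G.edges := by
    intro h
    exact hns (Finset.mem_image.mpr ⟨(σ j, σ k), h, rfl⟩)
  have h2 : (σ k, σ j) ∉ G.edges := by
    intro h
    exact hns (Finset.mem_image.mpr ⟨(σ k, σ j), h, Sym2.eq_swap⟩)
  exact hnCI (hM _ _ _ (key_dsep G σ hσ j k hjk h1 h2))

end Aux

/-- If the CI model is Markov w.r.t. `G` and adjacency-faithful, then every output
of the sparsest permutation algorithm (every `G_π` achieving the minimum edge count
over all permutations) has skeleton equal to that of `G`. -/
theorem sp_skeleton_recovery (CI : CIModel p) (G : DAG p)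
    (hMarkov : Markov G CI) (hAF : AdjFaithful G CI) :
    ∀ π : Equiv.Perm (Fin p), (minimalIMap CI π).edges.card = spScore CI →
      (minimalIMap CI π).skeleton = G.skeleton := by
  intro π hπ
  obtain ⟨σ₀, hσ₀⟩ := G.acyclic
  have hA : G.skeleton ⊆ (minimalIMap CI π).skeleton := skel_subset_of_AF CI G hAF π
  have hB : (minimalIMap CI σ₀).skeleton ⊆ G.skeleton := skel_subset_of_markov CI G hMarkov σ₀ hσ₀
  have hmin : spScore CI ≤ (minimalIMap CI σ₀).edges.card :=
    Finset.min'_le _ _ (Finset.mem_image.mpr ⟨σ₀, Finset.mem_univ _, rfl⟩)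
  have hcard : (minimalIMap CI π).skeleton.card ≤ G.skeleton.card := by
    rw [skeleton_card, hπ]
    calc spScore CI ≤ (minimalIMap CI σ₀).edges.card := hmin
      _ = (minimalIMap CI σ₀).skeleton.card := (skeleton_card _).symm
      _ ≤ G.skeleton.card := Finset.card_le_card hB
  exact (Finset.eq_of_subset_of_card_le hA hcard).symm
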